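/- Let f(n) satisfy f(n) → ∞ and f(n) = o(log log n), let p = (log n + f(n))/n, and let G ~ G(n,p). Then with high probability |Small(G) ∪ N(Small(G))| ≤ n^{0.6}, where N(Small(G)) is the external neighbourhood of Small(G). -/

import Mathlib

open MeasureTheory Filter

/-- Bernoulli measure on `Bool` with success probability (the truncation to `[0,1]` of) `p`. -/
noncomputable def bernoulliPMF (p : ℝ) : PMF Bool :=
  PMF.bernoulli (min (Real.toNNReal p) 1) (min_le_right _ _)

/-- The Erdős–Rényi measure `G(n,p)`: each potential edge (element of `Sym2 (Fin n)`)
is present independently with probability `p`. -/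
noncomputable def erMeasure (n : ℕ) (p : ℝ) : Measure (Sym2 (Fin n) → Bool) :=
  Measure.pi fun _ => (bernoulliPMF p).toMeasure

instance (n : ℕ) (p : ℝ) : IsProbabilityMeasure (erMeasure n p) := by
  unfold erMeasure; infer_instance

/-- The simple graph on `Fin n` encoded by an edge-indicator function. -/
def graphOfFun {n : ℕ} (f : Sym2 (Fin n) → Bool) : SimpleGraph (Fin n) where
  Adj u v := u ≠ v ∧ f s(u, v) = true
  symm := ⟨fun u v ⟨h1, h2⟩ => ⟨h1.symm, by rwa [Sym2.eq_swap]⟩⟩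
  loopless := ⟨fun u ⟨h1, _⟩ => h1 rfl⟩
/-- The external neighbourhood of a vertex set `U`. -/
def extNbhd {V : Type*} (G : SimpleGraph V) (U : Set V) : Set V :=
  {v | v ∉ U ∧ ∃ u ∈ U, G.Adj u v}

/-- The degree of a vertex. -/
noncomputable def deg {V : Type*} (G : SimpleGraph V) (v : V) : ℕ :=
  (G.neighborSet v).ncard

/-- The number of neighbours of `v` inside the set `S`. -/
noncomputable def degIn {V : Type*} (G : SimpleGraph V) (v : V) (S : Set V) : ℕ :=
  (G.neighborSet v ∩ S).ncard

/-- The number of edges of `G` with one endpoint in `U` and the other in `W`. -/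
noncomputable def edgesBetween {V : Type*} (G : SimpleGraph V) (U W : Set V) : ℕ :=
  {e ∈ G.edgeSet | ∃ u ∈ U, ∃ w ∈ W, e = s(u, w)}.ncard

/-- The number of edges of `G` spanned by `U`. -/
noncomputable def edgesWithin {V : Type*} (G : SimpleGraph V) (U : Set V) : ℕ :=
  {e ∈ G.edgeSet | ∃ u ∈ U, ∃ w ∈ U, e = s(u, w)}.ncard

/-- `Small(G)`: vertices of degree at most `log n / 10`. -/
def smallSet {n : ℕ} (G : SimpleGraph (Fin n)) : Set (Fin n) :=
  {v | (deg G v : ℝ) ≤ Real.log n / 10}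

noncomputable def gammaC : ℝ := 1 / 10000


set_option maxHeartbeats 1600000


open Real in
lemma pow_div_fact_mono (x : ℝ) (hx : 0 ≤ x) {j k : ℕ} (hjk : j ≤ k) (h : (k:ℝ) ≤ x) :
    x ^ j / j.factorial ≤ x ^ k / k.factorial := by
  induction k, hjk using Nat.le_induction with
  | base => exact le_rfl
  | succ k hk ih =>
    have hk' : (k:ℝ) ≤ x := le_trans (by exact_mod_cast Nat.le_succ k) h
    refine le_trans (ih hk') ?_
    rw [div_le_div_iff₀ (by positivity) (by positivity)]
    have h1 : ((k+1).factorial : ℝ) = (k+1) * k.factorial := by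
      rw [Nat.factorial_succ]; push_cast; ring
    rw [pow_succ, h1]
    have hkf : (0:ℝ) < k.factorial := by positivity
    have hx1 : ((k:ℝ)+1) ≤ x := by push_cast at h; linarith
    calc x^k * (((k:ℝ)+1) * k.factorial) = ((k:ℝ)+1) * (x^k * k.factorial) := by ring
      _ ≤ x * (x^k * k.factorial) := by
          apply mul_le_mul_of_nonneg_right hx1 (by positivity)
      _ = x^k * x * k.factorial := by ring

lemma log_le_two_sqrt {x : ℝ} (hx : 0 < x) : Real.log x ≤ 2 * Real.sqrt x := by
  have h1 : Real.log (Real.sqrt x) = Real.log x / 2 := Real.log_sqrt hx.le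
  have h2 : Real.log (Real.sqrt x) ≤ Real.sqrt x - 1 :=
    Real.log_le_sub_one_of_pos (Real.sqrt_pos.mpr hx)
  have h3 : (0:ℝ) ≤ Real.sqrt x := Real.sqrt_nonneg x
  linarith

lemma measAll {n : ℕ} (s : Set (Sym2 (Fin n) → Bool)) : MeasurableSet s :=
  s.to_countable.measurableSet

lemma bern_true (p : ℝ) : (bernoulliPMF p).toMeasure {true} = min (ENNReal.ofReal p) 1 := by
  rw [bernoulliPMF, PMF.toMeasure_apply_singleton _ _ (measurableSet_singleton _),
    PMF.bernoulli_apply]; simp [ENNReal.ofReal]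

lemma bern_false (p : ℝ) : (bernoulliPMF p).toMeasure {false} = 1 - min (ENNReal.ofReal p) 1 := by
  rw [bernoulliPMF, PMF.toMeasure_apply_singleton _ _ (measurableSet_singleton _),
    PMF.bernoulli_apply]; simp [ENNReal.ofReal]

lemma erMeasure_cyl (n : ℕ) (p : ℝ) (T F : Finset (Sym2 (Fin n))) (hTF : Disjoint T F) :
    erMeasure n p {g | (∀ e ∈ T, g e = true) ∧ (∀ e ∈ F, g e = false)} =
      (min (ENNReal.ofReal p) 1) ^ T.card * (1 - min (ENNReal.ofReal p) 1) ^ F.card := by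
  classical
  have hset : {g : Sym2 (Fin n) → Bool | (∀ e ∈ T, g e = true) ∧ (∀ e ∈ F, g e = false)} =
      Set.univ.pi (fun e => if e ∈ T then {true} else if e ∈ F then ({false} : Set Bool)
        else Set.univ) := by
    ext g
    simp only [Set.mem_setOf_eq, Set.mem_pi, Set.mem_univ, forall_true_left]
    constructor
    · rintro ⟨h1, h2⟩ e
      split_ifs with hT hF
      · exact h1 e hT
      · exact h2 e hF
      · trivial
    · intro h
      constructor
      · intro e he; have := h e; rw [if_pos he] at this; exact this
      · intro e he; have := h e; rw [if_neg (fun h' => (hTF.forall_ne_finset h' he) rfl),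
          if_pos he] at this; exact this
  rw [erMeasure, hset, Measure.pi_pi]
  have hval : ∀ e : Sym2 (Fin n), (bernoulliPMF p).toMeasure
      (if e ∈ T then {true} else if e ∈ F then ({false} : Set Bool) else Set.univ) =
      if e ∈ T then min (ENNReal.ofReal p) 1 else if e ∈ F then 1 - min (ENNReal.ofReal p) 1
        else 1 := by
    intro e
    split_ifs
    · exact bern_true p
    · exact bern_false p
    · exact measure_univ
  rw [Finset.prod_congr rfl (fun e _ => hval e)]
  rw [← Finset.prod_subset ((T ∪ F).subset_univ) (by
    intro e _ he
    rw [if_neg (fun h => he (Finset.mem_union_left _ h)),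
      if_neg (fun h => he (Finset.mem_union_right _ h))])]
  rw [Finset.prod_union hTF]
  congr 1
  · rw [Finset.prod_congr rfl (fun e he => if_pos he), Finset.prod_const]
  · rw [Finset.prod_congr rfl (fun e he => by
      rw [if_neg (fun h => (hTF.forall_ne_finset h he) rfl), if_pos he]), Finset.prod_const]

/-- the set of potential edges at `v` -/
def eSet {n : ℕ} (v : Fin n) : Finset (Sym2 (Fin n)) :=
  (Finset.univ.erase v).image (fun u => s(u, v))

lemma eSet_injOn {n : ℕ} (v : Fin n) : Set.InjOn (fun u => s(u, v)) (Finset.univ.erase v) := by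
  intro a ha b hb h
  simp only [Finset.coe_erase, Set.mem_diff, Finset.mem_coe, Finset.mem_singleton] at ha hb
  rcases Sym2.eq_iff.mp h with ⟨h1, _⟩ | ⟨h1, h2⟩
  · exact h1
  · exact (ha.2 (Set.mem_singleton_iff.mpr h1)).elim

lemma eSet_card {n : ℕ} (v : Fin n) : (eSet v).card = n - 1 := by
  rw [eSet, Finset.card_image_of_injOn (eSet_injOn v), Finset.card_erase_of_mem
    (Finset.mem_univ v), Finset.card_univ, Fintype.card_fin]

lemma deg_eq_card {n : ℕ} (fe : Sym2 (Fin n) → Bool) (v : Fin n) :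
    deg (graphOfFun fe) v = ((eSet v).filter (fun e => fe e = true)).card := by
  classical
  have h1 : (graphOfFun fe).neighborSet v =
      ↑(Finset.univ.filter (fun u => u ≠ v ∧ fe s(u, v) = true)) := by
    ext u
    simp only [SimpleGraph.mem_neighborSet, graphOfFun, Finset.coe_filter, Set.mem_setOf_eq,
      Finset.mem_univ, true_and]
    constructor
    · rintro ⟨h, h'⟩; exact ⟨Ne.symm h, by rwa [Sym2.eq_swap] at h'⟩
    · rintro ⟨h, h'⟩; exact ⟨Ne.symm h, by rwa [Sym2.eq_swap]⟩
  rw [deg, h1, Set.ncard_coe_finset]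
  apply Finset.card_nbij (fun u => s(u, v))
  · intro u hu
    simp only [Finset.mem_coe, Finset.mem_filter, Finset.mem_univ, true_and] at hu ⊢
    exact ⟨Finset.mem_image.mpr ⟨u, Finset.mem_erase.mpr ⟨hu.1, Finset.mem_univ u⟩, rfl⟩, hu.2⟩
  · intro a ha b hb h
    simp only [Finset.coe_filter, Set.mem_setOf_eq] at ha hb
    exact eSet_injOn v (Finset.mem_erase.mpr ⟨ha.2.1, Finset.mem_univ a⟩)
      (Finset.mem_erase.mpr ⟨hb.2.1, Finset.mem_univ b⟩) h
  · intro e he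
    simp only [Finset.coe_filter, Set.mem_setOf_eq, eSet, Finset.mem_image] at he
    obtain ⟨⟨u, hu, rfl⟩, hfe⟩ := he
    refine ⟨u, ?_, rfl⟩
    simp only [Finset.coe_filter, Set.mem_setOf_eq, Finset.mem_univ, true_and, and_true]
    exact ⟨(Finset.mem_erase.mp hu).1, hfe⟩

lemma prob_deg_le (n : ℕ) (p : ℝ) (v : Fin n) (k : ℕ) :
    erMeasure n p {fe | deg (graphOfFun fe) v ≤ k} ≤
      ∑ j ∈ Finset.range (k+1), ((n-1).choose j : ENNReal) *
        ((min (ENNReal.ofReal p) 1) ^ j * (1 - min (ENNReal.ofReal p) 1) ^ (n-1-j)) := by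
  classical
  set q := min (ENNReal.ofReal p) 1 with hq
  have hsub : {fe : Sym2 (Fin n) → Bool | deg (graphOfFun fe) v ≤ k} ⊆
      ⋃ j ∈ Finset.range (k+1), ⋃ T ∈ (eSet v).powersetCard j,
        {g : Sym2 (Fin n) → Bool | (∀ e ∈ T, g e = true) ∧ (∀ e ∈ (eSet v) \ T, g e = false)} := by
    intro fe hfe
    simp only [Set.mem_setOf_eq] at hfe
    rw [deg_eq_card] at hfe
    set T := (eSet v).filter (fun e => fe e = true) with hT
    simp only [Set.mem_iUnion]
    refine ⟨T.card, Finset.mem_range.mpr (Nat.lt_succ_of_le hfe), T,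
      Finset.mem_powersetCard.mpr ⟨Finset.filter_subset _ _, rfl⟩, ?_, ?_⟩
    · intro e he; exact (Finset.mem_filter.mp he).2
    · intro e he
      rcases Finset.mem_sdiff.mp he with ⟨he1, he2⟩
      by_contra h
      exact he2 (Finset.mem_filter.mpr ⟨he1, by simpa using h⟩)
  calc erMeasure n p {fe | deg (graphOfFun fe) v ≤ k}
      ≤ erMeasure n p (⋃ j ∈ Finset.range (k+1), ⋃ T ∈ (eSet v).powersetCard j,
        {g : Sym2 (Fin n) → Bool | (∀ e ∈ T, g e = true) ∧ (∀ e ∈ (eSet v) \ T, g e = false)}) :=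
        measure_mono hsub
    _ ≤ ∑ j ∈ Finset.range (k+1), erMeasure n p (⋃ T ∈ (eSet v).powersetCard j,
        {g : Sym2 (Fin n) → Bool | (∀ e ∈ T, g e = true) ∧ (∀ e ∈ (eSet v) \ T, g e = false)}) :=
        measure_biUnion_finset_le _ _
    _ ≤ ∑ j ∈ Finset.range (k+1), ∑ T ∈ (eSet v).powersetCard j, erMeasure n p
        {g : Sym2 (Fin n) → Bool | (∀ e ∈ T, g e = true) ∧ (∀ e ∈ (eSet v) \ T, g e = false)} :=
        Finset.sum_le_sum (fun j _ => measure_biUnion_finset_le _ _)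
    _ = ∑ j ∈ Finset.range (k+1), ∑ T ∈ (eSet v).powersetCard j, q ^ j * (1-q) ^ (n-1-j) := by
        refine Finset.sum_congr rfl (fun j _ => Finset.sum_congr rfl (fun T hT => ?_))
        rcases Finset.mem_powersetCard.mp hT with ⟨hTs, hTc⟩
        rw [erMeasure_cyl n p T _ (Finset.disjoint_sdiff), hTc,
          Finset.card_sdiff_of_subset hTs, eSet_card, hTc]
    _ = ∑ j ∈ Finset.range (k+1), ((n-1).choose j : ENNReal) * (q ^ j * (1-q) ^ (n-1-j)) := by
        refine Finset.sum_congr rfl (fun j _ => ?_)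
        rw [Finset.sum_const, Finset.card_powersetCard, eSet_card, nsmul_eq_mul]

lemma markov_small (n : ℕ) (p : ℝ) (s : ENNReal) :
    s * erMeasure n p {fe | s ≤ ((smallSet (graphOfFun fe)).ncard : ENNReal)} ≤
      ∑ v : Fin n, erMeasure n p {fe | v ∈ smallSet (graphOfFun fe)} := by
  classical
  have key := mul_meas_ge_le_lintegral₀ (μ := erMeasure n p)
    (f := fun fe => ((smallSet (graphOfFun fe)).ncard : ENNReal))
    (Measurable.aemeasurable (fun _ _ => measAll _)) s
  refine le_trans key (le_of_eq ?_)
  have hcount : ∀ fe : Sym2 (Fin n) → Bool, ((smallSet (graphOfFun fe)).ncard : ENNReal) =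
      ∑ v : Fin n, Set.indicator {fe' | v ∈ smallSet (graphOfFun fe')} 1 fe := by
    intro fe
    have h1 : smallSet (graphOfFun fe) =
        ↑(Finset.univ.filter (fun v => v ∈ smallSet (graphOfFun fe))) := by
      ext v; simp
    rw [h1, Set.ncard_coe_finset, Finset.card_filter]
    push_cast
    refine Finset.sum_congr rfl (fun v _ => ?_)
    rw [Set.indicator_apply]
    simp only [Set.mem_setOf_eq, Pi.one_apply]
  calc ∫⁻ fe, ((smallSet (graphOfFun fe)).ncard : ENNReal) ∂(erMeasure n p)
      = ∫⁻ fe, ∑ v : Fin n, Set.indicator {fe' | v ∈ smallSet (graphOfFun fe')} 1 fe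
        ∂(erMeasure n p) := by
        exact lintegral_congr hcount
    _ = ∑ v : Fin n, ∫⁻ fe, Set.indicator {fe' | v ∈ smallSet (graphOfFun fe')} 1 fe
        ∂(erMeasure n p) := lintegral_finset_sum _ (fun v _ => (fun _ _ => measAll _))
    _ = ∑ v : Fin n, erMeasure n p {fe | v ∈ smallSet (graphOfFun fe)} :=
        Finset.sum_congr rfl (fun v _ => lintegral_indicator_one (measAll _))

lemma small_mem_iff {n : ℕ} (fe : Sym2 (Fin n) → Bool) (v : Fin n) :
    v ∈ smallSet (graphOfFun fe) ↔
      deg (graphOfFun fe) v ≤ Nat.floor (Real.log n / 10) := by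
  have h0 : (0:ℝ) ≤ Real.log n / 10 := by
    have := Real.log_natCast_nonneg n
    linarith
  rw [smallSet, Set.mem_setOf_eq, Nat.le_floor_iff h0]

lemma det_union_le {n : ℕ} (G : SimpleGraph (Fin n)) :
    (((smallSet G ∪ extNbhd G (smallSet G)).ncard : ℝ)) ≤
      ((smallSet G).ncard : ℝ) * (1 + Real.log n / 10) := by
  classical
  set S := smallSet G with hS
  set F : Finset (Fin n) := (Set.toFinite S).toFinset with hF
  set t : Fin n → Finset (Fin n) :=
    fun v => insert v (Set.toFinite (G.neighborSet v)).toFinset with ht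
  have hsub : (Set.toFinite (S ∪ extNbhd G S)).toFinset ⊆ F.biUnion t := by
    intro x hx
    rw [Set.Finite.mem_toFinset] at hx
    rw [Finset.mem_biUnion]
    rcases hx with hx | ⟨_, u, hu, hadj⟩
    · exact ⟨x, (Set.Finite.mem_toFinset _).mpr hx, Finset.mem_insert_self _ _⟩
    · exact ⟨u, (Set.Finite.mem_toFinset _).mpr hu, Finset.mem_insert.mpr
        (Or.inr ((Set.Finite.mem_toFinset _).mpr hadj))⟩
  have h1 : ((S ∪ extNbhd G S).ncard : ℝ) ≤ ∑ v ∈ F, ((t v).card : ℝ) := by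
    rw [Set.ncard_eq_toFinset_card _ (Set.toFinite _)]
    calc (((Set.toFinite (S ∪ extNbhd G S)).toFinset.card : ℝ))
        ≤ ((F.biUnion t).card : ℝ) := by exact_mod_cast Finset.card_le_card hsub
      _ ≤ ((∑ v ∈ F, (t v).card : ℕ) : ℝ) := by exact_mod_cast Finset.card_biUnion_le
      _ = ∑ v ∈ F, ((t v).card : ℝ) := by push_cast; ring
  refine h1.trans ?_
  have h2 : ∀ v ∈ F, ((t v).card : ℝ) ≤ 1 + Real.log n / 10 := by
    intro v hv
    rw [hF, Set.Finite.mem_toFinset] at hv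
    have hdeg : ((Set.toFinite (G.neighborSet v)).toFinset.card : ℝ) = (deg G v : ℝ) := by
      rw [deg, Set.ncard_eq_toFinset_card _ (Set.toFinite _)]
    calc ((t v).card : ℝ) ≤ ((Set.toFinite (G.neighborSet v)).toFinset.card : ℝ) + 1 := by
          exact_mod_cast Finset.card_insert_le _ _
      _ ≤ 1 + Real.log n / 10 := by
          rw [hdeg]
          have h3 := hv
          rw [hS, smallSet, Set.mem_setOf_eq] at h3
          linarith
  calc ∑ v ∈ F, ((t v).card : ℝ) ≤ ∑ _v ∈ F, (1 + Real.log n / 10) :=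
        Finset.sum_le_sum h2
    _ = (F.card : ℝ) * (1 + Real.log n / 10) := by rw [Finset.sum_const, nsmul_eq_mul]
    _ = (S.ncard : ℝ) * (1 + Real.log n / 10) := by
        rw [hF, ← Set.ncard_eq_toFinset_card _ (Set.toFinite S)]


lemma real_tail_bound (n : ℕ) (c : ℝ) (hc0 : 0 ≤ c) (hcL : c ≤ Real.log (Real.log n))
    (hL : 40000 ≤ Real.log n) (hn4 : 1000 ≤ (n:ℝ) ^ (0.04:ℝ)) :
    (n:ℝ) * ∑ j ∈ Finset.range (Nat.floor (Real.log n / 10) + 1),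
      ((n-1).choose j : ℝ) * (((Real.log n + c)/n)^j * (1 - (Real.log n + c)/n)^(n-1-j))
    ≤ (n:ℝ) ^ (0.45:ℝ) := by
  set L := Real.log n with hLdef
  set k := Nat.floor (L / 10) with hkdef
  set m := n - 1 with hmdef
  set p := (L + c)/n with hpdef
  -- basic facts
  have hn1 : 1 ≤ n := by
    by_contra h
    push_neg at h
    interval_cases n <;> simp_all [Real.log_zero] <;> norm_num at hL
  have hn0 : (0:ℝ) < n := by exact_mod_cast hn1
  have hnbig : (40001:ℝ) ≤ n := by
    have h1 : Real.exp 40000 ≤ Real.exp L := Real.exp_le_exp.mpr hL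
    rw [hLdef, Real.exp_log hn0] at h1
    have h2 : (40000:ℝ) + 1 ≤ Real.exp 40000 := Real.add_one_le_exp 40000
    linarith
  have hsn : (200:ℝ) ≤ Real.sqrt n := by
    rw [show (200:ℝ) = Real.sqrt (200^2) by rw [Real.sqrt_sq]; norm_num]
    exact Real.sqrt_le_sqrt (by rw [show ((200:ℝ)^2) = 40000 by norm_num]; linarith)
  have hsn0 : (0:ℝ) < Real.sqrt n := by linarith
  have hsqn : Real.sqrt n * Real.sqrt n = n := Real.mul_self_sqrt hn0.le
  have hLsqrt : L ≤ 2 * Real.sqrt n := log_le_two_sqrt hn0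
  have hlogL : Real.log L ≤ L / 100 := by
    have h1 : Real.log L ≤ 2 * Real.sqrt L := log_le_two_sqrt (by linarith)
    have h2 : (200:ℝ) ≤ Real.sqrt L := by
      rw [show (200:ℝ) = Real.sqrt (200^2) by rw [Real.sqrt_sq]; norm_num]
      exact Real.sqrt_le_sqrt (by norm_num; linarith)
    have h3 : Real.sqrt L * Real.sqrt L = L := Real.mul_self_sqrt (by linarith)
    nlinarith
  have hcub : c ≤ L / 100 := le_trans hcL hlogL
  have hnp_lb : L ≤ L + c := by linarith
  have hnp_ub : L + c ≤ 1.01 * L := by linarith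
  have hp0 : 0 ≤ p := by rw [hpdef]; positivity
  have hp_ub : p ≤ 2.02 / Real.sqrt n := by
    rw [hpdef, div_le_div_iff₀ hn0 hsn0]
    calc (L + c) * Real.sqrt n ≤ (1.01 * L) * Real.sqrt n := by nlinarith
      _ ≤ (1.01 * (2 * Real.sqrt n)) * Real.sqrt n := by nlinarith
      _ = 2.02 * n := by rw [mul_assoc, mul_assoc, hsqn]; ring
  have hp1 : p ≤ 1/2 := by
    have : (2.02:ℝ) / Real.sqrt n ≤ 2.02 / 200 := by
      apply div_le_div_of_nonneg_left (by norm_num) (by norm_num) hsn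
    linarith
  have hk_ub : (k:ℝ) ≤ L / 10 := Nat.floor_le (by positivity)
  have hk_lb : L / 11 ≤ (k:ℝ) := by
    have h1 := Nat.lt_floor_add_one (L / 10)
    rw [← hkdef] at h1
    linarith
  have hk1 : 1 ≤ k := Nat.le_floor (by push_cast; linarith)
  have hk0 : (0:ℝ) < k := by
    have : (1:ℝ) ≤ k := by exact_mod_cast hk1
    linarith
  have hsn_n : Real.sqrt n ≤ n / 200 := by nlinarith
  have hkm : k ≤ m := by
    have h1 : (k:ℝ) ≤ (n:ℝ)/1000 := by
      calc (k:ℝ) ≤ L/10 := hk_ub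
        _ ≤ 2 * Real.sqrt n / 10 := by linarith
        _ ≤ (n:ℝ)/1000 := by nlinarith
    have h2 : ((m:ℕ):ℝ) = (n:ℝ) - 1 := by
      rw [hmdef, Nat.cast_sub hn1]; norm_num
    have : (k:ℝ) ≤ (m:ℝ) := by rw [h2]; linarith
    exact_mod_cast this
  have hm_cast : ((m:ℕ):ℝ) = (n:ℝ) - 1 := by rw [hmdef, Nat.cast_sub hn1]; norm_num
  have hpk : p * k ≤ 1 := by
    calc p * k ≤ (2.02 / Real.sqrt n) * (2 * Real.sqrt n / 10) := by
          apply mul_le_mul hp_ub (by linarith) hk0.le (by positivity)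
      _ = 2.02 * 2 / 10 * (Real.sqrt n / Real.sqrt n) := by ring
      _ ≤ 1 := by rw [div_self hsn0.ne']; norm_num
  -- the termwise bound
  have hknp : (k:ℝ) ≤ L + c := by linarith
  have hmp : (m:ℝ) * p ≤ L + c := by
    have he : ((m:ℝ)) * p = (L+c) - (L+c)/n := by
      rw [hm_cast, hpdef]; field_simp
    have hpos : 0 ≤ (L+c)/n := by positivity
    linarith
  have hmp0 : 0 ≤ (m:ℝ) * p := by positivity
  have hterm : ∀ j ∈ Finset.range (k+1), ((m).choose j : ℝ) * (p^j * (1-p)^(m-j)) ≤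
      ((L+c)^k / k.factorial) * (1-p)^(m-k) := by
    intro j hj
    rw [Finset.mem_range, Nat.lt_succ_iff] at hj
    have h1 : ((m).choose j : ℝ) * p^j ≤ (L+c)^j / j.factorial := by
      have hc1 : ((m).choose j : ℝ) ≤ (m:ℝ)^j / j.factorial := Nat.choose_le_pow_div j m
      calc ((m).choose j : ℝ) * p^j ≤ ((m:ℝ)^j / j.factorial) * p^j := by
            apply mul_le_mul_of_nonneg_right hc1 (by positivity)
        _ = ((m:ℝ) * p)^j / j.factorial := by rw [mul_pow]; ring
        _ ≤ (L+c)^j / j.factorial := by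
            apply div_le_div_of_nonneg_right ?_ (by positivity)
            exact pow_le_pow_left₀ hmp0 hmp j
    have h2 : (L+c)^j / j.factorial ≤ (L+c)^k / k.factorial :=
      pow_div_fact_mono _ (by linarith) hj hknp
    have h3 : (1-p)^(m-j) ≤ (1-p)^(m-k) :=
      pow_le_pow_of_le_one (by linarith) (by linarith) (Nat.sub_le_sub_left hj m)
    calc ((m).choose j : ℝ) * (p^j * (1-p)^(m-j))
        = (((m).choose j : ℝ) * p^j) * (1-p)^(m-j) := by ring
      _ ≤ ((L+c)^k / k.factorial) * (1-p)^(m-k) := by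
          apply mul_le_mul (h1.trans h2) h3 (pow_nonneg (by linarith) _)
            (div_nonneg (pow_nonneg (by linarith) _) (by positivity))
  have hsum : ∑ j ∈ Finset.range (k+1), ((m).choose j : ℝ) * (p^j * (1-p)^(m-j)) ≤
      (k+1) * (((L+c)^k / k.factorial) * (1-p)^(m-k)) := by
    calc ∑ j ∈ Finset.range (k+1), ((m).choose j : ℝ) * (p^j * (1-p)^(m-j))
        ≤ ∑ _j ∈ Finset.range (k+1), ((L+c)^k / k.factorial) * (1-p)^(m-k) :=
          Finset.sum_le_sum hterm
      _ = (k+1) * (((L+c)^k / k.factorial) * (1-p)^(m-k)) := by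
          rw [Finset.sum_const, Finset.card_range, nsmul_eq_mul]; push_cast; ring
  -- factorial lower bound
  have hfact : ((k:ℝ))^k ≤ Real.exp k * k.factorial := by
    have h1 := Real.sum_le_exp_of_nonneg (x := (k:ℝ)) (by positivity) (k+1)
    have h2 : ((k:ℝ))^k / k.factorial ≤ ∑ i ∈ Finset.range (k+1), (k:ℝ)^i / i.factorial := by
      apply Finset.single_le_sum (f := fun i => (k:ℝ)^i / (i.factorial:ℝ))
        (fun i _ => by positivity) (Finset.self_mem_range_succ k)
    have h3 : ((k:ℝ))^k / k.factorial ≤ Real.exp k := le_trans h2 h1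
    have hkf : (0:ℝ) < k.factorial := by positivity
    rw [div_le_iff₀ hkf] at h3
    linarith
  have hexp1 : (2.7182818283:ℝ) < Real.exp 1 := Real.exp_one_gt_d9
  have h12e : L + c ≤ Real.exp 3 * k := by
    have he3 : (12:ℝ) ≤ Real.exp 3 := by
      have : Real.exp 3 = Real.exp 1 * Real.exp 1 * Real.exp 1 := by
        rw [← Real.exp_add, ← Real.exp_add]; norm_num
      nlinarith
    have hL11k : L ≤ 11 * k := by linarith
    calc L + c ≤ 12 * (k:ℝ) := by linarith
      _ ≤ Real.exp 3 * k := mul_le_mul_of_nonneg_right he3 hk0.le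
  have h5 : (L+c)^k / k.factorial ≤ Real.exp 4 ^ k := by
    have hkf : (0:ℝ) < k.factorial := by positivity
    rw [div_le_iff₀ hkf]
    have hek : Real.exp ((k:ℝ)) = Real.exp 1 ^ k := by
      rw [← Real.exp_nat_mul]; norm_num
    have he34 : Real.exp 3 * Real.exp 1 = Real.exp 4 := by
      rw [← Real.exp_add]; norm_num
    calc (L+c)^k ≤ (Real.exp 3 * k)^k := pow_le_pow_left₀ (by linarith) h12e k
      _ = Real.exp 3 ^ k * ((k:ℝ))^k := mul_pow _ _ _
      _ ≤ Real.exp 3 ^ k * (Real.exp k * k.factorial) := by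
          apply mul_le_mul_of_nonneg_left hfact (by positivity)
      _ = (Real.exp 3 * Real.exp 1) ^ k * k.factorial := by
          rw [hek, mul_pow]; ring
      _ = Real.exp 4 ^ k * k.factorial := by rw [he34]
  have h6 : Real.exp 4 ^ k ≤ (n:ℝ) ^ (0.4:ℝ) := by
    rw [← Real.exp_nat_mul, Real.rpow_def_of_pos hn0]
    apply Real.exp_le_exp.mpr
    rw [← hLdef]
    nlinarith
  have h7 : (1-p)^(m-k) ≤ Real.exp 2 / n := by
    have ha : 1 - p ≤ Real.exp (-p) := by
      have := Real.add_one_le_exp (-p); linarith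
    have hb : (1-p)^(m-k) ≤ Real.exp (-p) ^ (m-k) :=
      pow_le_pow_left₀ (by linarith) ha _
    have hc : Real.exp (-p) ^ (m-k) = Real.exp (((m-k : ℕ):ℝ) * (-p)) := by
      rw [Real.exp_nat_mul]
    have hd : ((m-k : ℕ):ℝ) = (m:ℝ) - k := by
      rw [Nat.cast_sub hkm]
    have hpn : p * n = L + c := by rw [hpdef]; field_simp
    have he : ((m:ℝ) - k) * (-p) ≤ 2 - L := by
      have h1 : ((m:ℝ) - k) * (-p) = -(p * n) + p + p * k := by
        rw [hm_cast]; ring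
      rw [h1, hpn]
      linarith
    calc (1-p)^(m-k) ≤ Real.exp (((m-k : ℕ):ℝ) * (-p)) := by rw [← hc]; exact hb
      _ ≤ Real.exp (2 - L) := by
          apply Real.exp_le_exp.mpr
          rw [hd]; exact he
      _ = Real.exp 2 / n := by
          rw [Real.exp_sub, hLdef, Real.exp_log hn0]
  have he2 : Real.exp 2 ≤ 8 := by
    have : Real.exp 2 = Real.exp 1 * Real.exp 1 := by rw [← Real.exp_add]; norm_num
    have h9 : Real.exp 1 < 2.7182818286 := Real.exp_one_lt_d9
    nlinarith
  have hLrpow : L ≤ 100 * (n:ℝ)^(0.01:ℝ) := by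
    have := Real.log_le_rpow_div (x := (n:ℝ)) (ε := 0.01) hn0.le (by norm_num)
    rw [← hLdef] at this
    have h' : (n:ℝ)^(0.01:ℝ)/0.01 = 100 * (n:ℝ)^(0.01:ℝ) := by ring
    linarith
  have hkL2 : ((k:ℝ)+1) ≤ L := by linarith
  have hrp1 : (0:ℝ) < (n:ℝ)^(0.4:ℝ) := Real.rpow_pos_of_pos hn0 _
  have hrp2 : (0:ℝ) < (n:ℝ)^(0.01:ℝ) := Real.rpow_pos_of_pos hn0 _
  calc (n:ℝ) * ∑ j ∈ Finset.range (k+1),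
        ((m).choose j : ℝ) * (p^j * (1-p)^(m-j))
      ≤ (n:ℝ) * ((k+1) * (((L+c)^k / k.factorial) * (1-p)^(m-k))) := by
        apply mul_le_mul_of_nonneg_left hsum hn0.le
    _ ≤ (n:ℝ) * ((k+1) * (((n:ℝ)^(0.4:ℝ)) * (Real.exp 2 / n))) := by
        apply mul_le_mul_of_nonneg_left ?_ hn0.le
        apply mul_le_mul_of_nonneg_left ?_ (by positivity)
        apply mul_le_mul (h5.trans h6) h7 (pow_nonneg (by linarith) _) hrp1.le
    _ = ((k:ℝ)+1) * Real.exp 2 * (n:ℝ)^(0.4:ℝ) := by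
        field_simp
    _ ≤ L * 8 * (n:ℝ)^(0.4:ℝ) := by
        apply mul_le_mul_of_nonneg_right ?_ hrp1.le
        apply mul_le_mul hkL2 he2 (by positivity) (by linarith)
    _ ≤ (100 * (n:ℝ)^(0.01:ℝ)) * 8 * (n:ℝ)^(0.4:ℝ) := by
        apply mul_le_mul_of_nonneg_right ?_ hrp1.le
        apply mul_le_mul_of_nonneg_right hLrpow (by norm_num)
    _ = 800 * ((n:ℝ)^(0.01:ℝ) * (n:ℝ)^(0.4:ℝ)) := by ring
    _ = 800 * (n:ℝ)^(0.41:ℝ) := by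
        rw [← Real.rpow_add hn0]; norm_num
    _ ≤ (n:ℝ)^(0.04:ℝ) * (n:ℝ)^(0.41:ℝ) := by
        apply mul_le_mul_of_nonneg_right (by linarith) (Real.rpow_pos_of_pos hn0 _).le
    _ = (n:ℝ)^(0.45:ℝ) := by
        rw [← Real.rpow_add hn0]; norm_num

lemma aux_bounds (n : ℕ) (c : ℝ) (hc0 : 0 ≤ c) (hcL : c ≤ Real.log (Real.log n))
    (hL : 40000 ≤ Real.log n) (hn4 : 1000 ≤ (n:ℝ)^(0.04:ℝ)) :
    1 ≤ n ∧ (0 ≤ (Real.log n + c)/n ∧ (Real.log n + c)/n ≤ 1) ∧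
      1 + Real.log n/10 ≤ (n:ℝ)^(0.1:ℝ) := by
  have hn1 : 1 ≤ n := by
    by_contra h
    push_neg at h
    interval_cases n <;> simp_all [Real.log_zero] <;> norm_num at hL
  have hn0 : (0:ℝ) < n := by exact_mod_cast hn1
  have hnbig : (40001:ℝ) ≤ n := by
    have h1 : Real.exp 40000 ≤ Real.exp (Real.log n) := Real.exp_le_exp.mpr hL
    rw [Real.exp_log hn0] at h1
    have h2 : (40000:ℝ) + 1 ≤ Real.exp 40000 := Real.add_one_le_exp 40000
    linarith
  have hsn : (200:ℝ) ≤ Real.sqrt n := by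
    rw [show (200:ℝ) = Real.sqrt (200^2) by rw [Real.sqrt_sq]; norm_num]
    exact Real.sqrt_le_sqrt (by rw [show ((200:ℝ)^2) = 40000 by norm_num]; linarith)
  have hsn0 : (0:ℝ) < Real.sqrt n := by linarith
  have hsqn : Real.sqrt n * Real.sqrt n = n := Real.mul_self_sqrt hn0.le
  have hLsqrt : Real.log n ≤ 2 * Real.sqrt n := log_le_two_sqrt hn0
  have hlogL : Real.log (Real.log n) ≤ Real.log n / 100 := by
    have h1 : Real.log (Real.log n) ≤ 2 * Real.sqrt (Real.log n) :=
      log_le_two_sqrt (by linarith)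
    have h2 : (200:ℝ) ≤ Real.sqrt (Real.log n) := by
      rw [show (200:ℝ) = Real.sqrt (200^2) by rw [Real.sqrt_sq]; norm_num]
      exact Real.sqrt_le_sqrt (by rw [show ((200:ℝ)^2) = 40000 by norm_num]; linarith)
    have h3 : Real.sqrt (Real.log n) * Real.sqrt (Real.log n) = Real.log n :=
      Real.mul_self_sqrt (by linarith)
    nlinarith
  have hcub : c ≤ Real.log n / 100 := le_trans hcL hlogL
  have hp0 : 0 ≤ (Real.log n + c)/n := div_nonneg (by linarith) hn0.le
  have hp1 : (Real.log n + c)/n ≤ 1 := by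
    rw [div_le_one hn0]
    nlinarith
  have hL100 : Real.log n ≤ 100 * (n:ℝ)^(0.01:ℝ) := by
    have h5 := Real.log_le_rpow_div (x := (n:ℝ)) (ε := 0.01) hn0.le (by norm_num)
    have h' : (n:ℝ)^(0.01:ℝ)/0.01 = 100 * (n:ℝ)^(0.01:ℝ) := by ring
    linarith
  have h100 : (100:ℝ) ≤ (n:ℝ)^(0.09:ℝ) := by
    have := Real.rpow_le_rpow_of_exponent_le (x := (n:ℝ)) (by linarith)
      (by norm_num : (0.04:ℝ) ≤ 0.09)
    linarith
  have final : 1 + Real.log n/10 ≤ (n:ℝ)^(0.1:ℝ) := by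
    have e1 : (n:ℝ)^(0.09:ℝ) * (n:ℝ)^(0.01:ℝ) = (n:ℝ)^(0.1:ℝ) := by
      rw [← Real.rpow_add hn0]; norm_num
    have e2 : 100 * (n:ℝ)^(0.01:ℝ) ≤ (n:ℝ)^(0.09:ℝ) * (n:ℝ)^(0.01:ℝ) :=
      mul_le_mul_of_nonneg_right h100 (Real.rpow_pos_of_pos hn0 _).le
    linarith
  exact ⟨hn1, ⟨hp0, hp1⟩, final⟩

open Asymptotics in
/-- **(P4)**: whp `|Small(G) ∪ N(Small(G))| ≤ n^0.6`. -/
theorem gnp_small_union_nbhd (f : ℕ → ℝ) (hf : Tendsto f atTop atTop)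
    (hf' : f =o[atTop] fun n : ℕ => Real.log (Real.log n)) :
    Tendsto (fun n : ℕ => erMeasure n ((Real.log n + f n) / n)
        {fe | (((smallSet (graphOfFun fe) ∪ extNbhd (graphOfFun fe) (smallSet (graphOfFun fe))).ncard : ℝ)
            ≤ (n : ℝ) ^ (0.6 : ℝ))})
      atTop (nhds 1) := by
  have F1 : ∀ᶠ n : ℕ in atTop, 0 ≤ f n := hf.eventually_ge_atTop 0
  have F3 : ∀ᶠ n : ℕ in atTop, 40000 ≤ Real.log (n:ℝ) :=
    (Real.tendsto_log_atTop.comp tendsto_natCast_atTop_atTop).eventually_ge_atTop 40000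
  have F2 : ∀ᶠ n : ℕ in atTop, f n ≤ Real.log (Real.log n) := by
    filter_upwards [hf'.def (by norm_num : (0:ℝ) < 1), F3] with n h1 h3
    rw [Real.norm_eq_abs, Real.norm_eq_abs, one_mul] at h1
    have hL1 : (1:ℝ) ≤ Real.log n := by linarith
    calc f n ≤ |f n| := le_abs_self _
      _ ≤ |Real.log (Real.log n)| := h1
      _ = Real.log (Real.log n) := abs_of_nonneg (Real.log_nonneg hL1)
  have F4 : ∀ᶠ n : ℕ in atTop, (1000:ℝ) ≤ (n:ℝ)^(0.04:ℝ) :=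
    ((tendsto_rpow_atTop (by norm_num : (0:ℝ) < 0.04)).comp
      tendsto_natCast_atTop_atTop).eventually_ge_atTop 1000
  have key : ∀ᶠ n : ℕ in atTop,
      1 - ENNReal.ofReal ((n:ℝ)^(-0.05:ℝ)) ≤ erMeasure n ((Real.log n + f n) / n)
        {fe | (((smallSet (graphOfFun fe) ∪ extNbhd (graphOfFun fe)
          (smallSet (graphOfFun fe))).ncard : ℝ) ≤ (n : ℝ) ^ (0.6 : ℝ))} := by
    filter_upwards [F1, F2, F3, F4] with n h1 h2 h3 h4
    obtain ⟨hn1, ⟨hp0, hp1⟩, hL10⟩ := aux_bounds n (f n) h1 h2 h3 h4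
    have hn0 : (0:ℝ) < n := by exact_mod_cast hn1
    set p : ℝ := (Real.log n + f n)/n with hpdef
    set k : ℕ := Nat.floor (Real.log n / 10) with hkdef
    set μ := erMeasure n p with hμdef
    set T : ℝ := ∑ j ∈ Finset.range (k+1), ((n-1).choose j : ℝ) *
      (p^j * (1-p)^(n-1-j)) with hTdef
    have htnn : ∀ j ∈ Finset.range (k+1),
        0 ≤ ((n-1).choose j : ℝ) * (p^j * (1-p)^(n-1-j)) := fun j _ =>
      mul_nonneg (Nat.cast_nonneg _)
        (mul_nonneg (pow_nonneg hp0 _) (pow_nonneg (by linarith) _))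
    have hq : min (ENNReal.ofReal p) 1 = ENNReal.ofReal p :=
      min_eq_left (ENNReal.ofReal_le_one.mpr hp1)
    have hAv : ∀ v : Fin n, μ {fe | v ∈ smallSet (graphOfFun fe)} ≤ ENNReal.ofReal T := by
      intro v
      have e1 : {fe : Sym2 (Fin n) → Bool | v ∈ smallSet (graphOfFun fe)} =
          {fe | deg (graphOfFun fe) v ≤ k} := by
        ext fe; exact small_mem_iff fe v
      rw [e1]
      refine (prob_deg_le n p v k).trans (le_of_eq ?_)
      have hterm : ∀ j : ℕ, ((n-1).choose j : ENNReal) *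
          ((min (ENNReal.ofReal p) 1)^j * (1 - min (ENNReal.ofReal p) 1)^(n-1-j)) =
          ENNReal.ofReal (((n-1).choose j : ℝ) * (p^j * (1-p)^(n-1-j))) := by
        intro j
        rw [hq, show (1 : ENNReal) - ENNReal.ofReal p = ENNReal.ofReal (1-p) by
            rw [ENNReal.ofReal_sub _ hp0, ENNReal.ofReal_one],
          ← ENNReal.ofReal_pow hp0, ← ENNReal.ofReal_pow (by linarith),
          ← ENNReal.ofReal_natCast ((n-1).choose j),
          ← ENNReal.ofReal_mul (pow_nonneg hp0 _),
          ← ENNReal.ofReal_mul (Nat.cast_nonneg _)]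
      rw [Finset.sum_congr rfl (fun j _ => hterm j),
        ← ENNReal.ofReal_sum_of_nonneg htnn]
    have hsum : ∑ v : Fin n, μ {fe | v ∈ smallSet (graphOfFun fe)} ≤
        (n : ENNReal) * ENNReal.ofReal T := by
      calc ∑ v : Fin n, μ {fe | v ∈ smallSet (graphOfFun fe)}
          ≤ ∑ _v : Fin n, ENNReal.ofReal T := Finset.sum_le_sum (fun v _ => hAv v)
        _ = (n : ENNReal) * ENNReal.ofReal T := by
            rw [Finset.sum_const, Finset.card_univ, Fintype.card_fin, nsmul_eq_mul]
    have hreal := real_tail_bound n (f n) h1 h2 h3 h4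
    rw [← hpdef, ← hkdef, ← hTdef] at hreal
    have hnT : (n:ENNReal) * ENNReal.ofReal T ≤ ENNReal.ofReal ((n:ℝ)^(0.45:ℝ)) := by
      rw [← ENNReal.ofReal_natCast n, ← ENNReal.ofReal_mul (Nat.cast_nonneg n)]
      exact ENNReal.ofReal_le_ofReal hreal
    have hmark := markov_small n p (ENNReal.ofReal ((n:ℝ)^(0.5:ℝ)))
    have h5 : ENNReal.ofReal ((n:ℝ)^(0.5:ℝ)) ≠ 0 := by
      rw [Ne, ENNReal.ofReal_eq_zero, not_le]
      positivity
    have hB : μ {fe | ENNReal.ofReal ((n:ℝ)^(0.5:ℝ)) ≤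
        ((smallSet (graphOfFun fe)).ncard : ENNReal)} ≤
        ENNReal.ofReal ((n:ℝ)^(-0.05:ℝ)) := by
      have h7 : μ {fe | ENNReal.ofReal ((n:ℝ)^(0.5:ℝ)) ≤
          ((smallSet (graphOfFun fe)).ncard : ENNReal)} * ENNReal.ofReal ((n:ℝ)^(0.5:ℝ))
          ≤ ENNReal.ofReal ((n:ℝ)^(0.45:ℝ)) := by
        rw [mul_comm]
        exact hmark.trans (hsum.trans hnT)
      have h8 := (ENNReal.le_div_iff_mul_le (Or.inl h5) (Or.inl ENNReal.ofReal_ne_top)).mpr h7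
      refine h8.trans (le_of_eq ?_)
      rw [← ENNReal.ofReal_div_of_pos (by positivity), ← Real.rpow_sub hn0]
      norm_num
    have hsubc : {fe : Sym2 (Fin n) → Bool |
        (((smallSet (graphOfFun fe) ∪ extNbhd (graphOfFun fe)
          (smallSet (graphOfFun fe))).ncard : ℝ) ≤ (n : ℝ) ^ (0.6 : ℝ))}ᶜ ⊆
        {fe | ENNReal.ofReal ((n:ℝ)^(0.5:ℝ)) ≤
          ((smallSet (graphOfFun fe)).ncard : ENNReal)} := by
      intro fe hfe
      simp only [Set.mem_compl_iff, Set.mem_setOf_eq, not_le] at hfe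
      simp only [Set.mem_setOf_eq]
      rw [← ENNReal.ofReal_natCast]
      apply ENNReal.ofReal_le_ofReal
      by_contra hcon
      push_neg at hcon
      have hd := det_union_le (graphOfFun fe)
      have hle : (((smallSet (graphOfFun fe) ∪ extNbhd (graphOfFun fe)
          (smallSet (graphOfFun fe))).ncard : ℝ)) ≤ (n:ℝ)^(0.5:ℝ) * (n:ℝ)^(0.1:ℝ) := by
        refine hd.trans ?_
        apply mul_le_mul hcon.le hL10 (by linarith [Real.log_natCast_nonneg n]) (by positivity)
      rw [← Real.rpow_add hn0] at hle
      norm_num at hle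
      linarith
    have hcompl : μ {fe : Sym2 (Fin n) → Bool |
        (((smallSet (graphOfFun fe) ∪ extNbhd (graphOfFun fe)
          (smallSet (graphOfFun fe))).ncard : ℝ) ≤ (n : ℝ) ^ (0.6 : ℝ))}ᶜ ≤
        ENNReal.ofReal ((n:ℝ)^(-0.05:ℝ)) := (measure_mono hsubc).trans hB
    have heq : μ {fe : Sym2 (Fin n) → Bool |
        (((smallSet (graphOfFun fe) ∪ extNbhd (graphOfFun fe)
          (smallSet (graphOfFun fe))).ncard : ℝ) ≤ (n : ℝ) ^ (0.6 : ℝ))} =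
        1 - μ {fe : Sym2 (Fin n) → Bool |
        (((smallSet (graphOfFun fe) ∪ extNbhd (graphOfFun fe)
          (smallSet (graphOfFun fe))).ncard : ℝ) ≤ (n : ℝ) ^ (0.6 : ℝ))}ᶜ := by
      rw [← compl_compl ({fe : Sym2 (Fin n) → Bool |
        (((smallSet (graphOfFun fe) ∪ extNbhd (graphOfFun fe)
          (smallSet (graphOfFun fe))).ncard : ℝ) ≤ (n : ℝ) ^ (0.6 : ℝ))})]
      rw [prob_compl_eq_one_sub (measAll _), compl_compl]
    rw [heq]
    exact tsub_le_tsub_left hcompl 1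
  have hlb : Tendsto (fun n : ℕ => 1 - ENNReal.ofReal ((n:ℝ)^(-0.05:ℝ))) atTop (nhds 1) := by
    have h0 : Tendsto (fun n : ℕ => ((n:ℝ)^(-0.05:ℝ))) atTop (nhds 0) := by
      have ha := (tendsto_rpow_neg_atTop (y := 0.05) (by norm_num)).comp
        (tendsto_natCast_atTop_atTop (R := ℝ))
      exact ha
    have h0' : Tendsto (fun n : ℕ => ENNReal.ofReal ((n:ℝ)^(-0.05:ℝ))) atTop (nhds 0) := by
      simpa using ENNReal.tendsto_ofReal h0
    have hs := ENNReal.Tendsto.sub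
      (tendsto_const_nhds : Tendsto (fun _ : ℕ => (1:ENNReal)) atTop (nhds 1))
      h0' (Or.inl (by norm_num))
    simpa using hs
  exact tendsto_of_tendsto_of_tendsto_of_le_of_le' hlb tendsto_const_nhds key
    (Eventually.of_forall (fun n => prob_le_one))
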